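/- For p < 0, the Jacobian matrix of the vector field (x - x²y + pxy² + y³, y + py³) at the singular point (1/√(-p), 1/√(-p)) has two negative real eigenvalues (the point is a hyperbolic stable node). -/

import Mathlib

open Polynomial in
theorem stable_node_p_neg (p : ℝ) (hp : p < 0) :
    ∃ l₁ l₂ : ℝ, l₁ < 0 ∧ l₂ < 0 ∧
      (Matrix.charpoly
        (let a : ℝ := 1 / Real.sqrt (-p);
         !![deriv (fun x' : ℝ => x' - x' ^ 2 * a + p * x' * a ^ 2 + a ^ 3) a,
            deriv (fun y' : ℝ => a - a ^ 2 * y' + p * a * y' ^ 2 + y' ^ 3) a;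
            deriv (fun x' : ℝ => a + p * a ^ 3) a,
            deriv (fun y' : ℝ => y' + p * y' ^ 3) a]) =
        (X - C l₁) * (X - C l₂)) := by
  have hp' : (0:ℝ) < -p := by linarith
  have hs : 0 < Real.sqrt (-p) := Real.sqrt_pos.mpr hp'
  set a : ℝ := 1 / Real.sqrt (-p) with ha
  have ha0 : 0 < a := by positivity
  have hpa2 : p * a ^ 2 = -1 := by
    rw [ha, div_pow, one_pow, Real.sq_sqrt hp'.le]
    field_simp
    rw [div_self hp.ne]
  have h11 : deriv (fun x' : ℝ => x' - x' ^ 2 * a + p * x' * a ^ 2 + a ^ 3) a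
      = -2 * a ^ 2 := by
    have hd : HasDerivAt (fun x' : ℝ => x' - x' ^ 2 * a + p * x' * a ^ 2 + a ^ 3)
        (1 - (↑2 * a ^ (2-1)) * a + p * 1 * a ^ 2) a := by
      simpa using (((hasDerivAt_id a).sub ((hasDerivAt_pow 2 a).mul_const a)).add
        (((hasDerivAt_id a).const_mul p).mul_const (a ^ 2))).add_const (a ^ 3)
    rw [hd.deriv]
    norm_num
    nlinarith [hpa2]
  have h12 : deriv (fun y' : ℝ => a - a ^ 2 * y' + p * a * y' ^ 2 + y' ^ 3) a
      = 2 * a ^ 2 - 2 := by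
    have hd : HasDerivAt (fun y' : ℝ => a - a ^ 2 * y' + p * a * y' ^ 2 + y' ^ 3)
        (-(a ^ 2 * 1) + (p * a) * (↑2 * a ^ (2-1)) + ↑3 * a ^ (3-1)) a := by
      exact ((((hasDerivAt_id a).const_mul (a ^ 2)).const_sub a).add
        ((hasDerivAt_pow 2 a).const_mul (p * a))).add (hasDerivAt_pow 3 a)
    rw [hd.deriv]
    norm_num
    nlinarith [hpa2]
  have h21 : deriv (fun _ : ℝ => a + p * a ^ 3) a = 0 := deriv_const _ _
  have h22 : deriv (fun y' : ℝ => y' + p * y' ^ 3) a = -2 := by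
    have hd : HasDerivAt (fun y' : ℝ => y' + p * y' ^ 3)
        (1 + p * (↑3 * a ^ (3-1))) a :=
      (hasDerivAt_id a).add ((hasDerivAt_pow 3 a).const_mul p)
    rw [hd.deriv]
    norm_num
    nlinarith [hpa2]
  refine ⟨-2 * a ^ 2, -2, by nlinarith, by norm_num, ?_⟩
  simp only [h11, h12, h21, h22]
  rw [Matrix.charpoly, Matrix.det_fin_two]
  rw [Matrix.charmatrix_apply_eq, Matrix.charmatrix_apply_eq,
    Matrix.charmatrix_apply_ne _ _ _ (by decide : (0:Fin 2) ≠ 1),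
    Matrix.charmatrix_apply_ne _ _ _ (by decide : (1:Fin 2) ≠ 0)]
  norm_num [Matrix.cons_val_zero, Matrix.cons_val_one, Matrix.head_cons]
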